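/- arXiv:1902.03301 — 12 statements merged into one kernel-verified Lean document; each statement's English description precedes it below -/
import Mathlib

section
/- For every real number c with 0 < c < 1, the function f(x) = Real.sin x / Real.sin (c * x) is strictly decreasing on the interval (0, π/2]; that is, for all real x, y with 0 < x, x < y and y ≤ π/2, one has sin y / sin (c*y) < sin x / sin (c*x). -/
open Real

lemma tan_lt_aux (c : ℝ) (hc0 : 0 < c) (hc1 : c < 1) (x : ℝ) (hx : 0 < x)
    (hx2 : x < π / 2) : Real.tan (c * x) < c * Real.tan x := by
  have key : StrictMonoOn (fun t => c * Real.tan t - Real.tan (c * t)) (Set.Icc 0 x) := by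
    apply strictMonoOn_of_deriv_pos (convex_Icc 0 x)
    · intro t ht
      have h1 : ContinuousAt Real.tan t := Real.continuousAt_tan.2
        (Real.cos_pos_of_mem_Ioo ⟨by linarith [ht.1], by linarith [ht.2]⟩).ne'
      have h2 : ContinuousAt (fun t => Real.tan (c * t)) t := by
        have hcos : Real.cos (c * t) ≠ 0 := by
          have h0 : 0 ≤ c * t := mul_nonneg hc0.le ht.1
          have h1' : c * t < π / 2 := by nlinarith [ht.2]
          exact (Real.cos_pos_of_mem_Ioo ⟨by linarith, h1'⟩).ne'
        exact (Real.continuousAt_tan.2 hcos).comp (continuousAt_const.mul continuousAt_id)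
      exact ((continuousAt_const.mul h1).sub h2).continuousWithinAt
    · intro t ht
      rw [interior_Icc] at ht
      have ht0 : 0 < t := ht.1
      have ht2 : t < π / 2 := lt_trans ht.2 hx2
      have hct : 0 < c * t := mul_pos hc0 ht0
      have hct2 : c * t < t := by nlinarith
      have hcost : 0 < Real.cos t :=
        Real.cos_pos_of_mem_Ioo ⟨by linarith, ht2⟩
      have hcosct : 0 < Real.cos (c * t) :=
        Real.cos_pos_of_mem_Ioo ⟨by linarith, by linarith⟩
      have hcoslt : Real.cos t < Real.cos (c * t) := by
        apply Real.cos_lt_cos_of_nonneg_of_le_pi (le_of_lt hct) (by linarith [Real.pi_pos]) hct2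
      have hd1 : HasDerivAt (fun t => c * Real.tan t) (c * (1 / Real.cos t ^ 2)) t :=
        (Real.hasDerivAt_tan hcost.ne').const_mul c
      have hd2 : HasDerivAt (fun t => Real.tan (c * t)) (1 / Real.cos (c * t) ^ 2 * c) t := by
        have := (Real.hasDerivAt_tan hcosct.ne').comp t
          ((hasDerivAt_id t).const_mul c)
        simpa [mul_comm, Function.comp_def] using this
      rw [show (fun t => c * Real.tan t - Real.tan (c * t)) = (fun t => c * Real.tan t) - (fun t => Real.tan (c * t)) from rfl, (hd1.sub hd2).deriv]
      have h2 : Real.cos t ^ 2 < Real.cos (c * t) ^ 2 := by nlinarith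
      have : 1 / Real.cos (c * t) ^ 2 < 1 / Real.cos t ^ 2 := by
        apply one_div_lt_one_div_of_lt (by positivity) h2
      nlinarith
  have h := key (Set.left_mem_Icc.2 hx.le) (Set.right_mem_Icc.2 hx.le) hx
  simp only [mul_zero, Real.tan_zero, sub_zero] at h
  linarith

theorem ibn_alhaytham_lemma (c : ℝ) (hc0 : 0 < c) (hc1 : c < 1)
    (x y : ℝ) (hx : 0 < x) (hxy : x < y) (hy : y ≤ π / 2) :
    Real.sin y / Real.sin (c * y) < Real.sin x / Real.sin (c * x) := by
  have hpi := Real.pi_pos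
  have key : StrictAntiOn (fun t => Real.sin t / Real.sin (c * t)) (Set.Ioc 0 (π / 2)) := by
    apply strictAntiOn_of_deriv_neg (convex_Ioc 0 (π / 2))
    · apply ContinuousOn.div (Real.continuous_sin.continuousOn)
        ((Real.continuous_sin.comp (continuous_const.mul continuous_id)).continuousOn)
      intro t ht
      have : 0 < c * t := mul_pos hc0 ht.1
      have : c * t < π := by nlinarith [ht.2]
      exact (Real.sin_pos_of_pos_of_lt_pi (mul_pos hc0 ht.1) this).ne'
    · intro t ht
      rw [interior_Ioc] at ht
      have ht0 : 0 < t := ht.1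
      have ht2 : t < π / 2 := ht.2
      have hct : 0 < c * t := mul_pos hc0 ht0
      have hct2 : c * t < t := by nlinarith
      have hsinct : 0 < Real.sin (c * t) :=
        Real.sin_pos_of_pos_of_lt_pi hct (by linarith)
      have hcost : 0 < Real.cos t := Real.cos_pos_of_mem_Ioo ⟨by linarith, ht2⟩
      have hcosct : 0 < Real.cos (c * t) := Real.cos_pos_of_mem_Ioo ⟨by linarith, by linarith⟩
      have hd2 : HasDerivAt (fun t => Real.sin (c * t)) (Real.cos (c * t) * c) t := by
        have := (Real.hasDerivAt_sin (c * t)).comp t ((hasDerivAt_id t).const_mul c)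
        simpa [mul_comm, Function.comp_def] using this
      have hd : HasDerivAt (fun t => Real.sin t / Real.sin (c * t))
          ((Real.cos t * Real.sin (c * t) - Real.sin t * (Real.cos (c * t) * c)) /
            Real.sin (c * t) ^ 2) t :=
        (Real.hasDerivAt_sin t).div hd2 hsinct.ne'
      rw [hd.deriv]
      apply div_neg_of_neg_of_pos _ (by positivity)
      have htan := tan_lt_aux c hc0 hc1 t ht0 ht2
      rw [Real.tan_eq_sin_div_cos, Real.tan_eq_sin_div_cos] at htan
      rw [← mul_div_assoc, div_lt_div_iff₀ hcosct hcost] at htan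
      nlinarith
  exact key ⟨hx, by linarith⟩ ⟨by linarith, hy⟩ hxy
end

section
/- For all real numbers α, β with 0 < α < β < π/2, the following two inequalities hold: sin β / sin α < β / α, and β / α < (sin((α+β)/2) + sin((β−α)/2)) / (sin((α+β)/2) − sin((β−α)/2)). -/
open Real

/-- `tan x / x` is strictly increasing on `(0, π/2)`. -/
lemma tan_div_strictMono : StrictMonoOn (fun x : ℝ => Real.tan x / x) (Set.Ioo 0 (π / 2)) := by
  have h := strictMonoOn_of_deriv_pos (convex_Ioo (0:ℝ) (π/2))
    (f := fun x : ℝ => Real.tan x / x) ?_ ?_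
  · exact h
  · apply ContinuousOn.div
    · apply ContinuousOn.mono Real.continuousOn_tan
      intro z hz
      exact (Real.cos_pos_of_mem_Ioo ⟨by linarith [hz.1, pi_pos], hz.2⟩).ne'
    · exact continuousOn_id
    · intro z hz; exact hz.1.ne'
  · intro x hx
    rw [interior_Ioo] at hx
    obtain ⟨hx0, hx2⟩ := hx
    have hcos : 0 < Real.cos x := Real.cos_pos_of_mem_Ioo ⟨by linarith [pi_pos], hx2⟩
    have hd : HasDerivAt (fun x : ℝ => Real.tan x / x)
        ((1 / Real.cos x ^ 2 * x - Real.tan x * 1) / x ^ 2) x :=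
      (Real.hasDerivAt_tan hcos.ne').div (hasDerivAt_id x) hx0.ne'
    rw [hd.deriv]
    apply div_pos _ (by positivity)
    have key : Real.sin x * Real.cos x < x := by
      have := Real.sin_lt (by linarith : 0 < 2 * x)
      have h2 : Real.sin (2 * x) = 2 * Real.sin x * Real.cos x := Real.sin_two_mul x
      nlinarith
    have heq : 1 / Real.cos x ^ 2 * x - Real.tan x * 1
        = (x - Real.sin x * Real.cos x) / Real.cos x ^ 2 := by
      rw [Real.tan_eq_sin_div_cos]; field_simp
    rw [heq]
    exact div_pos (by linarith) (by positivity)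

theorem ibn_alhaytham_lemma1 (α β : ℝ) (hα : 0 < α) (hαβ : α < β) (hβ : β < π / 2) :
    Real.sin β / Real.sin α < β / α ∧
    β / α < (Real.sin ((α + β) / 2) + Real.sin ((β - α) / 2)) /
            (Real.sin ((α + β) / 2) - Real.sin ((β - α) / 2)) := by
  have hπ : 0 < π := pi_pos
  have hβ0 : 0 < β := hα.trans hαβ
  have hsinα : 0 < Real.sin α := Real.sin_pos_of_pos_of_lt_pi hα (by linarith)
  constructor
  · -- first inequality via strict concavity of sin
    have hx : (0:ℝ) ∈ Set.Icc 0 π := ⟨le_rfl, hπ.le⟩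
    have hy : β ∈ Set.Icc 0 π := ⟨hβ0.le, by linarith⟩
    have h1 : (0:ℝ) < 1 - α / β := by
      have : α / β < 1 := (div_lt_one hβ0).mpr hαβ; linarith
    have h2 : (0:ℝ) < α / β := by positivity
    have h3 : (1 - α / β) + α / β = 1 := by ring
    have hcc := strictConcaveOn_sin_Icc.2 hx hy hβ0.ne h1 h2 h3
    simp only [smul_eq_mul, mul_zero, Real.sin_zero, zero_add] at hcc
    have hαβ' : α / β * β = α := by field_simp
    rw [hαβ'] at hcc
    rw [div_lt_div_iff₀ hsinα hα]
    have h4 := mul_lt_mul_of_pos_right hcc hβ0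
    have h5 : α / β * Real.sin β * β = Real.sin β * α := by field_simp
    linarith
  · -- second inequality via monotonicity of tan x / x
    set a := α / 2 with ha
    set b := β / 2 with hb
    have ha0 : 0 < a := by positivity
    have hab : a < b := by simp [ha, hb]; linarith
    have hb2 : b < π / 2 := by rw [hb]; linarith
    have hcosa : 0 < Real.cos a := Real.cos_pos_of_mem_Ioo ⟨by linarith, by linarith⟩
    have hcosb : 0 < Real.cos b := Real.cos_pos_of_mem_Ioo ⟨by linarith, hb2⟩
    have hsina : 0 < Real.sin a := Real.sin_pos_of_pos_of_lt_pi ha0 (by linarith)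
    have hsinb : 0 < Real.sin b := Real.sin_pos_of_pos_of_lt_pi (by linarith) (by linarith)
    have hmono := tan_div_strictMono ⟨ha0, by linarith⟩ ⟨by linarith, hb2⟩ hab
    simp only [Real.tan_eq_sin_div_cos] at hmono
    -- hmono : sin a / cos a / a < sin b / cos b / b
    have key : b * (Real.cos b * Real.sin a) < a * (Real.sin b * Real.cos a) := by
      rw [div_div, div_div, div_lt_div_iff₀ (by positivity) (by positivity)] at hmono
      nlinarith
    have e1 : Real.sin ((α + β) / 2) + Real.sin ((β - α) / 2)
        = 2 * Real.sin b * Real.cos a := by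
      have h1 : (α + β) / 2 = b + a := by rw [ha, hb]; ring
      have h2 : (β - α) / 2 = b - a := by rw [ha, hb]; ring
      rw [h1, h2, Real.sin_add, Real.sin_sub]; ring
    have e2 : Real.sin ((α + β) / 2) - Real.sin ((β - α) / 2)
        = 2 * Real.cos b * Real.sin a := by
      have h1 : (α + β) / 2 = b + a := by rw [ha, hb]; ring
      have h2 : (β - α) / 2 = b - a := by rw [ha, hb]; ring
      rw [h1, h2, Real.sin_add, Real.sin_sub]; ring
    rw [e1, e2, div_lt_div_iff₀ hα (by positivity)]
    have hα2 : α = 2 * a := by rw [ha]; ring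
    have hβ2 : β = 2 * b := by rw [hb]; ring
    rw [hα2, hβ2]; nlinarith
end

section
/- Let a < b be real numbers and let f : ℝ → ℝ be continuous on the open interval (a, b). Suppose f is locally decreasing to the left at every point of (a, b), i.e. for every y ∈ (a, b) there exists η > 0 such that f(x) > f(y) for all x ∈ (y − η, y) ∩ (a, b). Then f is strictly decreasing on (a, b): for all x, y ∈ (a, b) with x < y, f(x) > f(y). -/
theorem locally_decreasing_left_implies_strict_anti
    (a b : ℝ) (hab : a < b) (f : ℝ → ℝ)
    (hcont : ContinuousOn f (Set.Ioo a b))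
    (hloc : ∀ y ∈ Set.Ioo a b, ∃ η > 0,
      ∀ x ∈ Set.Ioo a b, y - η < x → x < y → f x > f y) :
    ∀ x ∈ Set.Ioo a b, ∀ y ∈ Set.Ioo a b, x < y → f x > f y := by
  intro x hx y hy hxy
  have hsub : Set.Icc x y ⊆ Set.Ioo a b := fun t ht =>
    ⟨lt_of_lt_of_le hx.1 ht.1, lt_of_le_of_lt ht.2 hy.2⟩
  obtain ⟨q, hqmem, hqmax⟩ :=
    isCompact_Icc.exists_isMaxOn (Set.nonempty_Icc.2 hxy.le) (hcont.mono hsub)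
  rw [isMaxOn_iff] at hqmax
  have hqx : q = x := by
    by_contra h
    have hq : x < q := lt_of_le_of_ne hqmem.1 (Ne.symm h)
    obtain ⟨η, hη, hdec⟩ := hloc q (hsub hqmem)
    set s := max x (q - η / 2) with hs
    have hs1 : s < q := max_lt hq (by linarith)
    have hs2 : q - η < s := lt_of_lt_of_le (by linarith) (le_max_right _ _)
    have hsI : s ∈ Set.Icc x y := ⟨le_max_left _ _, le_trans hs1.le hqmem.2⟩
    have h1 := hdec s (hsub hsI) hs2 hs1
    have h2 := hqmax s hsI
    linarith
  subst hqx
  obtain ⟨η, hη, hdec⟩ := hloc y hy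
  set s := max q (y - η / 2) with hs
  have hs1 : s < y := max_lt hxy (by linarith)
  have hs2 : y - η < s := lt_of_lt_of_le (by linarith) (le_max_right _ _)
  have hsI : s ∈ Set.Icc q y := ⟨le_max_left _ _, hs1.le⟩
  have h1 := hdec s (hsub hsI) hs2 hs1
  have h2 := hqmax s hsI
  linarith
end

section
/- Let p, q, a, b be real numbers with sin(b−q) ≠ 0, sin(b−p) ≠ 0, sin(p−q) ≠ 0 and cos a ≠ 0. If sin(a+q)/sin(b−q) = sin(a−p)/sin(b−p), then sin(p+q)/sin(p−q) = 1 − (sin(b−a)·cos p)/(sin(b−p)·cos a). -/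
open Real

theorem trigonometric_lemma (p q a b : ℝ)
    (h1 : Real.sin (b - q) ≠ 0) (h2 : Real.sin (b - p) ≠ 0)
    (h3 : Real.sin (p - q) ≠ 0) (h4 : Real.cos a ≠ 0)
    (h : Real.sin (a + q) / Real.sin (b - q) = Real.sin (a - p) / Real.sin (b - p)) :
    Real.sin (p + q) / Real.sin (p - q)
      = 1 - Real.sin (b - a) * Real.cos p / (Real.sin (b - p) * Real.cos a) := by
  rw [div_eq_div_iff h1 h2] at h
  rw [div_eq_iff h3]
  field_simp
  simp only [Real.sin_add, Real.sin_sub, Real.cos_add, Real.cos_sub] at h ⊢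
  ring_nf at h ⊢
  linear_combination Real.cos p * h
end

section
/- Let k be a real number with 0 < k < 1, and let θ, Θ be real numbers with 0 < θ ≤ Θ ≤ π/2. Then k < sin(k·θ)/sin θ and sin(k·θ)/sin θ ≤ sin(k·Θ)/sin Θ. -/
open Real

private lemma sundial_hasDerivAt (k x : ℝ) :
    HasDerivAt (fun x => k * Real.cos (k*x) * Real.sin x - Real.sin (k*x) * Real.cos x)
      ((1 - k^2) * Real.sin (k*x) * Real.sin x) x := by
  have h1 : HasDerivAt (fun x : ℝ => k * x) k x := by
    simpa using (hasDerivAt_id x).const_mul k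
  have hcos : HasDerivAt (fun x => Real.cos (k*x)) (-Real.sin (k*x) * k) x :=
    (Real.hasDerivAt_cos (k*x)).comp x h1
  have hsin : HasDerivAt (fun x => Real.sin (k*x)) (Real.cos (k*x) * k) x :=
    (Real.hasDerivAt_sin (k*x)).comp x h1
  have := ((hcos.const_mul k).mul (Real.hasDerivAt_sin x)).sub
    (hsin.mul (Real.hasDerivAt_cos x))
  exact this.congr_deriv (by ring)

private lemma sundial_g_nonneg (k : ℝ) (hk0 : 0 < k) (hk1 : k < 1) :
    ∀ x ∈ Set.Icc (0:ℝ) (π/2),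
      0 ≤ k * Real.cos (k*x) * Real.sin x - Real.sin (k*x) * Real.cos x := by
  intro x hx
  set g := fun x => k * Real.cos (k*x) * Real.sin x - Real.sin (k*x) * Real.cos x with hg
  have hmono : MonotoneOn g (Set.Icc 0 (π/2)) := by
    apply monotoneOn_of_deriv_nonneg (convex_Icc _ _)
    · exact fun y _ => (sundial_hasDerivAt k y).continuousAt.continuousWithinAt
    · intro y _
      exact (sundial_hasDerivAt k y).differentiableAt.differentiableWithinAt
    · intro y hy
      rw [interior_Icc] at hy
      rw [(sundial_hasDerivAt k y).deriv]
      have hyπ : y < π := lt_of_lt_of_le hy.2 (by linarith [Real.pi_pos])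
      have h1 : 0 ≤ Real.sin y := Real.sin_nonneg_of_nonneg_of_le_pi hy.1.le hyπ.le
      have h2 : 0 ≤ Real.sin (k*y) := by
        apply Real.sin_nonneg_of_nonneg_of_le_pi (mul_nonneg hk0.le hy.1.le)
        nlinarith [mul_le_of_le_one_left hy.1.le hk1.le]
      have h3 : (0:ℝ) ≤ 1 - k^2 := by nlinarith
      positivity
  have h0 : g 0 = 0 := by simp [hg]
  have := hmono (Set.left_mem_Icc.2 (by positivity)) hx hx.1
  rw [h0] at this
  simpa [hg] using this

theorem sundial_enclosure (k : ℝ) (hk0 : 0 < k) (hk1 : k < 1)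
    (θ Θ : ℝ) (hθ : 0 < θ) (hθΘ : θ ≤ Θ) (hΘ : Θ ≤ π / 2) :
    k < Real.sin (k * θ) / Real.sin θ ∧
    Real.sin (k * θ) / Real.sin θ ≤ Real.sin (k * Θ) / Real.sin Θ := by
  have hπ := Real.pi_pos
  have hθπ : θ < π := by linarith
  have hsθ : 0 < Real.sin θ := Real.sin_pos_of_pos_of_lt_pi hθ hθπ
  constructor
  · -- strict concavity of sin
    have h := strictConcaveOn_sin_Icc.2
      (Set.mem_Icc.2 ⟨le_refl (0:ℝ), hπ.le⟩)
      (Set.mem_Icc.2 ⟨hθ.le, hθπ.le⟩)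
      (ne_of_lt hθ) (show (0:ℝ) < 1 - k by linarith) hk0 (by ring)
    simp only [smul_eq_mul, Real.sin_zero, mul_zero, zero_add] at h
    rw [lt_div_iff₀ hsθ]
    linarith
  · -- monotonicity of sin(kx)/sin x
    set f := fun x => Real.sin (k*x) / Real.sin x with hf
    have hsub : Set.Icc θ Θ ⊆ Set.Icc 0 (π/2) := by
      intro x hx
      exact ⟨le_trans hθ.le hx.1, le_trans hx.2 hΘ⟩
    have hspos : ∀ x ∈ Set.Icc θ Θ, 0 < Real.sin x := by
      intro x hx
      exact Real.sin_pos_of_pos_of_lt_pi (lt_of_lt_of_le hθ hx.1)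
        (by have := hx.2; linarith)
    have hmono : MonotoneOn f (Set.Icc θ Θ) := by
      apply monotoneOn_of_deriv_nonneg (convex_Icc _ _)
      · apply ContinuousOn.div
        · exact (Real.continuous_sin.comp (continuous_const.mul continuous_id)).continuousOn
        · exact Real.continuous_sin.continuousOn
        · exact fun x hx => (hspos x hx).ne'
      · intro x hx
        rw [interior_Icc] at hx
        have hx' : x ∈ Set.Icc θ Θ := ⟨hx.1.le, hx.2.le⟩
        have h1 : HasDerivAt (fun x : ℝ => k * x) k x := by
          simpa using (hasDerivAt_id x).const_mul k
        have hsin : HasDerivAt (fun x => Real.sin (k*x)) (Real.cos (k*x) * k) x := by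
          exact (Real.hasDerivAt_sin (k*x)).comp x h1
        exact ((hsin.div (Real.hasDerivAt_sin x)
          (hspos x hx').ne')).differentiableAt.differentiableWithinAt
      · intro x hx
        rw [interior_Icc] at hx
        have hx' : x ∈ Set.Icc θ Θ := ⟨hx.1.le, hx.2.le⟩
        have h1 : HasDerivAt (fun x : ℝ => k * x) k x := by
          simpa using (hasDerivAt_id x).const_mul k
        have hsin : HasDerivAt (fun x => Real.sin (k*x)) (Real.cos (k*x) * k) x := by
          exact (Real.hasDerivAt_sin (k*x)).comp x h1
        have hd := hsin.div (Real.hasDerivAt_sin x) (hspos x hx').ne'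
        rw [hf, show (fun x => Real.sin (k*x) / Real.sin x) = (fun x => Real.sin (k*x)) / Real.sin from rfl, hd.deriv]
        apply div_nonneg _ (sq_nonneg _)
        have := sundial_g_nonneg k hk0 hk1 x (hsub hx')
        nlinarith [this]
    exact hmono (Set.left_mem_Icc.2 hθΘ) (Set.right_mem_Icc.2 hθΘ) hθΘ
end

section
/- Let i₁, i₂, r₁, r₂ be real numbers with 0 < i₁ < i₂ ≤ π/2, 0 < r₁ < i₁, 0 < r₂ < i₂, and suppose sin i₁ / sin r₁ = sin i₂ / sin r₂. Then (i₁ − r₁)/i₁ < (i₂ − r₂)/i₂. -/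
open Real

private lemma aux_sin_mul_cos_lt {t : ℝ} (h0 : 0 < t) :
    Real.sin t * Real.cos t < t := by
  have h := Real.sin_lt (show (0:ℝ) < 2 * t by linarith)
  rw [Real.sin_two_mul] at h
  linarith

private lemma aux_phi_anti :
    StrictAntiOn (fun t => t * Real.cos t / Real.sin t) (Set.Ioo 0 π) := by
  apply strictAntiOn_of_deriv_neg (convex_Ioo _ _)
  · apply ContinuousOn.div
    · exact (continuous_id.mul Real.continuous_cos).continuousOn
    · exact Real.continuous_sin.continuousOn
    · intro x hx
      exact ne_of_gt (Real.sin_pos_of_pos_of_lt_pi hx.1 hx.2)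
  · intro x hx
    rw [interior_Ioo] at hx
    have hs : Real.sin x > 0 := Real.sin_pos_of_pos_of_lt_pi hx.1 hx.2
    have hs' : Real.sin x ≠ 0 := ne_of_gt hs
    have h1 : HasDerivAt (fun t : ℝ => t * Real.cos t)
        (1 * Real.cos x + x * (-Real.sin x)) x :=
      (hasDerivAt_id x).mul (Real.hasDerivAt_cos x)
    have h2 : HasDerivAt (fun t : ℝ => t * Real.cos t / Real.sin t)
        (((1 * Real.cos x + x * (-Real.sin x)) * Real.sin x -
          x * Real.cos x * Real.cos x) / (Real.sin x) ^ 2) x :=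
      h1.div (Real.hasDerivAt_sin x) hs'
    rw [h2.deriv]
    apply div_neg_of_neg_of_pos
    · have hpyth : x * (Real.sin x ^ 2 + Real.cos x ^ 2) = x := by
        rw [Real.sin_sq_add_cos_sq, mul_one]
      have := aux_sin_mul_cos_lt hx.1
      nlinarith [hpyth, this]
    · positivity

private lemma aux_key {c x : ℝ} (hc0 : 0 < c) (hc1 : c < 1)
    (hx0 : 0 < x) (hx : x < π / 2) :
    Real.sin (c * x) * Real.cos x < c * Real.cos (c * x) * Real.sin x := by
  have hpi : x < π := lt_trans hx (by linarith [Real.pi_pos])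
  have hcx0 : 0 < c * x := mul_pos hc0 hx0
  have hcxlt : c * x < x := by nlinarith
  have h := aux_phi_anti (Set.mem_Ioo.mpr ⟨hcx0, lt_trans hcxlt hpi⟩)
      (Set.mem_Ioo.mpr ⟨hx0, hpi⟩) hcxlt
  simp only at h
  have hsx : 0 < Real.sin x := Real.sin_pos_of_pos_of_lt_pi hx0 hpi
  have hscx : 0 < Real.sin (c * x) :=
    Real.sin_pos_of_pos_of_lt_pi hcx0 (lt_trans hcxlt hpi)
  rw [div_lt_div_iff₀ hsx hscx] at h
  -- h : x * cos x * sin (c*x) < c * x * cos (c*x) * sin x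
  have h' : x * (Real.sin (c * x) * Real.cos x) <
      x * (c * Real.cos (c * x) * Real.sin x) := by nlinarith
  exact lt_of_mul_lt_mul_left h' (le_of_lt hx0)

private lemma aux_g_mono {c : ℝ} (hc0 : 0 < c) (hc1 : c < 1) :
    StrictMonoOn (fun x => Real.sin (c * x) / Real.sin x)
      (Set.Ioc 0 (π / 2)) := by
  apply strictMonoOn_of_deriv_pos (convex_Ioc _ _)
  · apply ContinuousOn.div
    · exact (Real.continuous_sin.comp (continuous_const.mul continuous_id)).continuousOn
    · exact Real.continuous_sin.continuousOn
    · intro x hx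
      exact ne_of_gt (Real.sin_pos_of_pos_of_lt_pi hx.1
        (lt_of_le_of_lt hx.2 (by linarith [Real.pi_pos])))
  · intro x hx
    rw [interior_Ioc] at hx
    have hpi : x < π := lt_trans hx.2 (by linarith [Real.pi_pos])
    have hs : Real.sin x > 0 := Real.sin_pos_of_pos_of_lt_pi hx.1 hpi
    have hs' : Real.sin x ≠ 0 := ne_of_gt hs
    have h1 : HasDerivAt (fun t : ℝ => Real.sin (c * t))
        (Real.cos (c * x) * c) x := by
      have := (Real.hasDerivAt_sin (c * x)).comp x
        ((hasDerivAt_id x).const_mul c)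
      simpa [Function.comp_def] using this
    have h2 : HasDerivAt (fun t : ℝ => Real.sin (c * t) / Real.sin t)
        ((Real.cos (c * x) * c * Real.sin x -
          Real.sin (c * x) * Real.cos x) / (Real.sin x) ^ 2) x :=
      h1.div (Real.hasDerivAt_sin x) hs'
    rw [h2.deriv]
    apply div_pos
    · have := aux_key hc0 hc1 hx.1 hx.2
      nlinarith
    · positivity

theorem relative_deviation_increasing (i₁ i₂ r₁ r₂ : ℝ)
    (hi₁ : 0 < i₁) (hi : i₁ < i₂) (hi₂ : i₂ ≤ π / 2)
    (hr₁0 : 0 < r₁) (hr₁ : r₁ < i₁) (hr₂0 : 0 < r₂) (hr₂ : r₂ < i₂)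
    (hsnell : Real.sin i₁ / Real.sin r₁ = Real.sin i₂ / Real.sin r₂) :
    (i₁ - r₁) / i₁ < (i₂ - r₂) / i₂ := by
  have hpi := Real.pi_pos
  set c : ℝ := r₁ / i₁ with hc
  have hc0 : 0 < c := div_pos hr₁0 hi₁
  have hc1 : c < 1 := (div_lt_one hi₁).mpr hr₁
  have hci₁ : c * i₁ = r₁ := div_mul_cancel₀ r₁ (ne_of_gt hi₁)
  have hmono := aux_g_mono hc0 hc1
    (Set.mem_Ioc.mpr ⟨hi₁, le_of_lt (lt_of_lt_of_le hi hi₂)⟩)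
    (Set.mem_Ioc.mpr ⟨lt_trans hi₁ hi, hi₂⟩) hi
  simp only [hci₁] at hmono
  -- hmono : sin r₁ / sin i₁ < sin (c * i₂) / sin i₂
  have hsi₁ : 0 < Real.sin i₁ :=
    Real.sin_pos_of_pos_of_lt_pi hi₁ (by linarith)
  have hsi₂ : 0 < Real.sin i₂ :=
    Real.sin_pos_of_pos_of_lt_pi (lt_trans hi₁ hi) (by linarith)
  have hsr₁ : 0 < Real.sin r₁ :=
    Real.sin_pos_of_pos_of_lt_pi hr₁0 (by linarith)
  have hsr₂ : 0 < Real.sin r₂ :=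
    Real.sin_pos_of_pos_of_lt_pi hr₂0 (by linarith)
  have hsnell' : Real.sin r₁ / Real.sin i₁ = Real.sin r₂ / Real.sin i₂ := by
    rw [div_eq_div_iff hsr₁.ne' hsr₂.ne'] at hsnell
    rw [div_eq_div_iff hsi₁.ne' hsi₂.ne']
    linear_combination -hsnell
  rw [hsnell'] at hmono
  have hlt : Real.sin r₂ < Real.sin (c * i₂) := by
    rw [div_lt_div_iff₀ hsi₂ hsi₂] at hmono
    exact lt_of_mul_lt_mul_right hmono (le_of_lt hsi₂)
  -- deduce r₂ < c * i₂ by strict monotonicity of sin on [-π/2, π/2]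
  have hr₂lt : r₂ < c * i₂ := by
    by_contra hcon
    push_neg at hcon
    have hmem₁ : c * i₂ ∈ Set.Icc (-(π/2)) (π/2) := by
      constructor
      · nlinarith
      · nlinarith
    have hmem₂ : r₂ ∈ Set.Icc (-(π/2)) (π/2) := by
      constructor <;> nlinarith
    have := Real.strictMonoOn_sin.monotoneOn hmem₁ hmem₂ hcon
    linarith
  -- r₂ < r₁ * i₂ / i₁, conclude
  have hr₂' : r₂ * i₁ < r₁ * i₂ := by
    have := mul_lt_mul_of_pos_right hr₂lt hi₁
    rw [hc] at this
    field_simp at this ⊢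
    nlinarith
  rw [div_lt_div_iff₀ hi₁ (lt_trans hi₁ hi)]
  nlinarith
end

section
/- Let c be a real number and let P be a polynomial in two variables over ℝ such that P(sin x, sin(c·x)) = 0 for every real x. Suppose moreover that there exists a real number x₀ such that the one-variable polynomial Y ↦ P(sin x₀, Y) is not the zero polynomial. Then c is rational. -/
open Polynomial

private lemma rat_of_int_mul (c : ℝ) (a b : ℤ) (hb : b ≠ 0) (h : c * (b : ℝ) = (a : ℝ)) :
    ∃ q : ℚ, c = (q : ℝ) := by
  refine ⟨(a : ℚ) / (b : ℚ), ?_⟩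
  have hb' : (b : ℝ) ≠ 0 := Int.cast_ne_zero.mpr hb
  push_cast
  field_simp
  linarith [h]

theorem algebraic_relation_implies_rational (c : ℝ) (P : Polynomial (Polynomial ℝ))
    (hP : ∀ x : ℝ, (P.map (Polynomial.evalRingHom (Real.sin x))).eval (Real.sin (c * x)) = 0)
    (hne : ∃ x₀ : ℝ, P.map (Polynomial.evalRingHom (Real.sin x₀)) ≠ 0) :
    ∃ q : ℚ, c = (q : ℝ) := by
  obtain ⟨x₀, hQ⟩ := hne
  set Q := P.map (Polynomial.evalRingHom (Real.sin x₀)) with hQdef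
  have key : ∀ n : ℕ, Real.sin (c * (x₀ + n * (2 * Real.pi))) ∈ Q.roots.toFinset := by
    intro n
    have hs : Real.sin (x₀ + n * (2 * Real.pi)) = Real.sin x₀ :=
      Real.sin_add_nat_mul_two_pi _ _
    have h := hP (x₀ + n * (2 * Real.pi))
    rw [hs] at h
    rw [Multiset.mem_toFinset, Polynomial.mem_roots hQ]
    exact h
  set f : ℕ → {x // x ∈ Q.roots.toFinset} :=
    fun n => ⟨Real.sin (c * (x₀ + n * (2 * Real.pi))), key n⟩ with hf
  obtain ⟨y, hy⟩ := Finite.exists_infinite_fiber f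
  have hS : (f ⁻¹' {y}).Infinite := Set.infinite_coe_iff.mp hy
  obtain ⟨n, hn⟩ := hS.nonempty
  obtain ⟨m, hm, hnm⟩ := hS.exists_gt n
  obtain ⟨l, hl, hml⟩ := hS.exists_gt m
  have e1 : Real.sin (c * (x₀ + m * (2 * Real.pi))) = Real.sin (c * (x₀ + n * (2 * Real.pi))) := by
    have : f m = f n := by rw [hm, hn]
    simpa [hf] using congrArg Subtype.val this
  have e2 : Real.sin (c * (x₀ + l * (2 * Real.pi))) = Real.sin (c * (x₀ + n * (2 * Real.pi))) := by
    have : f l = f n := by rw [hl, hn]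
    simpa [hf] using congrArg Subtype.val this
  have hπ : (2 * Real.pi) ≠ 0 := by positivity
  rw [Real.sin_eq_sin_iff] at e1 e2
  obtain ⟨k₁, h1 | h1⟩ := e1
  · -- c * (n - m) = k₁
    refine rat_of_int_mul c k₁ ((n : ℤ) - m) (by omega) ?_
    apply mul_right_cancel₀ hπ
    push_cast
    linear_combination h1
  · obtain ⟨k₂, h2 | h2⟩ := e2
    · refine rat_of_int_mul c k₂ ((n : ℤ) - l) (by omega) ?_
      apply mul_right_cancel₀ hπ
      push_cast
      linear_combination h2
    · refine rat_of_int_mul c (k₂ - k₁) ((l : ℤ) - m) (by omega) ?_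
      apply mul_right_cancel₀ hπ
      push_cast
      linear_combination h2 - h1
end

section
/- For every real number c with 0 < c < 1 and every real y with 0 < y ≤ π/2, one has sin(y/2)/sin(c·y/2) > sin y / sin(c·y). -/
open Real

theorem halving_inequality (c : ℝ) (hc0 : 0 < c) (hc1 : c < 1)
    (y : ℝ) (hy0 : 0 < y) (hy : y ≤ π / 2) :
    Real.sin (y / 2) / Real.sin (c * y / 2) > Real.sin y / Real.sin (c * y) := by
  have hpi := Real.pi_gt_three
  have hy2 : 0 < y / 2 := by linarith
  have hcy2 : 0 < c * y / 2 := by positivity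
  have hcylt : c * y / 2 < y / 2 := by nlinarith
  have hsy2 : 0 < Real.sin (y / 2) :=
    Real.sin_pos_of_pos_of_lt_pi hy2 (by linarith)
  have hscy2 : 0 < Real.sin (c * y / 2) :=
    Real.sin_pos_of_pos_of_lt_pi hcy2 (by linarith)
  have hcos : Real.cos (y / 2) < Real.cos (c * y / 2) :=
    Real.cos_lt_cos_of_nonneg_of_le_pi (le_of_lt hcy2) (by linarith) hcylt
  have h1 : Real.sin y = 2 * Real.sin (y / 2) * Real.cos (y / 2) := by
    rw [← Real.sin_two_mul]; ring_nf
  have h2 : Real.sin (c * y) = 2 * Real.sin (c * y / 2) * Real.cos (c * y / 2) := by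
    rw [← Real.sin_two_mul]; ring_nf
  have hccy2 : 0 < Real.cos (c * y / 2) :=
    Real.cos_pos_of_mem_Ioo ⟨by linarith, by nlinarith⟩
  rw [h2, gt_iff_lt, div_lt_div_iff₀ (by positivity) hscy2, h1]
  nlinarith [mul_pos (mul_pos hsy2 hscy2) (sub_pos.mpr hcos)]
end

section
/- Let c be a real number with 0 < c < 1, let x, y be real with 0 < x < y < π/2, and let z ∈ (0, π/2) satisfy sin y / sin(c·y) = sin x / sin z. Then x − z < (1 − c)·y. -/
open Real

theorem intermediate_bound (c : ℝ) (hc0 : 0 < c) (hc1 : c < 1)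
    (x y z : ℝ) (hx : 0 < x) (hxy : x < y) (hy : y < π / 2)
    (hz0 : 0 < z) (hz : z < π / 2)
    (hdef : Real.sin y / Real.sin (c * y) = Real.sin x / Real.sin z) :
    x - z < (1 - c) * y := by
  have hpi := Real.pi_pos
  have hy0 : 0 < y := hx.trans hxy
  have hsy : 0 < Real.sin y := Real.sin_pos_of_pos_of_lt_pi hy0 (by linarith)
  have hscy : 0 < Real.sin (c * y) := Real.sin_pos_of_pos_of_lt_pi
    (by positivity) (by nlinarith)
  have hsx : 0 < Real.sin x := Real.sin_pos_of_pos_of_lt_pi hx (by linarith)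
  have hsz : 0 < Real.sin z := Real.sin_pos_of_pos_of_lt_pi hz0 (by linarith)
  have hdef' : Real.sin z * Real.sin y = Real.sin x * Real.sin (c * y) := by
    field_simp at hdef
    linarith [hdef]
  -- key cosine inequality
  have hcos : Real.cos (x - (2 - c) * y) < Real.cos (x - c * y) := by
    have h1 : Real.cos (x - (2 - c) * y) = Real.cos ((2 - c) * y - x) := by
      rw [← Real.cos_neg]; ring_nf
    rw [h1, ← Real.cos_abs (x - c * y)]
    apply Real.cos_lt_cos_of_nonneg_of_le_pi (abs_nonneg _) (by nlinarith)
    rcases abs_cases (x - c * y) with ⟨h, _⟩ | ⟨h, _⟩ <;> rw [h] <;> nlinarith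
  -- product-to-sum
  have prod : ∀ A B : ℝ, 2 * (Real.sin A * Real.sin B)
      = Real.cos (A - B) - Real.cos (A + B) := by
    intro A B
    rw [Real.cos_sub, Real.cos_add]; ring
  have key : Real.sin (x - (1 - c) * y) * Real.sin y < Real.sin x * Real.sin (c * y) := by
    have e1 := prod x (c * y)
    have e2 := prod (x - (1 - c) * y) y
    have : x - (1 - c) * y - y = x - (2 - c) * y := by ring
    rw [this] at e2
    have : x - (1 - c) * y + y = x + c * y := by ring
    rw [this] at e2
    linarith
  have hlt : Real.sin (x - (1 - c) * y) < Real.sin z := by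
    nlinarith
  by_contra hcon
  push_neg at hcon
  have : Real.sin z ≤ Real.sin (x - (1 - c) * y) := by
    apply Real.strictMonoOn_sin.monotoneOn ⟨by linarith, by linarith⟩
      ⟨by linarith, by nlinarith⟩ (by linarith)
  linarith
end

section
/- Let c be a real number with 0 < c < 1, let x, y be real with 0 < x < y < π/2, and let z ∈ (0, π/2) satisfy sin y / sin(c·y) = sin x / sin z. Then sin(x − z)/sin((1 − c)·y) < 1 − sin(c·y − z)/sin(c·y). -/
open Real

private lemma aux_pos_of_sq (s D R : ℝ) (h : s ^ 2 * D = R) (hR : 0 < R) (hs : 0 < s) :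
    0 < D := by nlinarith [mul_pos hs hs]

private lemma aux_lt_of_sq (X Y : ℝ) (h1 : 0 ≤ X) (h2 : 0 < Y) (h3 : 0 < Y ^ 2 - X ^ 2) :
    X < Y := by nlinarith

set_option maxHeartbeats 2000000 in
theorem key_estimate (c : ℝ) (hc0 : 0 < c) (hc1 : c < 1)
    (x y z : ℝ) (hx : 0 < x) (hxy : x < y) (hy : y < π / 2)
    (hz0 : 0 < z) (hz : z < π / 2)
    (hdef : Real.sin y / Real.sin (c * y) = Real.sin x / Real.sin z) :
    Real.sin (x - z) / Real.sin ((1 - c) * y) < 1 - Real.sin (c * y - z) / Real.sin (c * y) := by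
  have e1 : (1 - c) * y = y - c * y := by ring
  rw [e1]
  set a := c * y with ha
  have hy0 : 0 < y := hx.trans hxy
  have ha0 : 0 < a := mul_pos hc0 hy0
  have hay : a < y := by rw [ha]; nlinarith
  have hpi : (0:ℝ) < π := Real.pi_pos
  have hsy : 0 < Real.sin y := Real.sin_pos_of_pos_of_lt_pi hy0 (by linarith)
  have hsx : 0 < Real.sin x := Real.sin_pos_of_pos_of_lt_pi hx (by linarith)
  have hsa : 0 < Real.sin a := Real.sin_pos_of_pos_of_lt_pi ha0 (by linarith)
  have hsz : 0 < Real.sin z := Real.sin_pos_of_pos_of_lt_pi hz0 (by linarith)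
  have hcz : 0 < Real.cos z := Real.cos_pos_of_mem_Ioo ⟨by linarith, hz⟩
  have hcx : 0 < Real.cos x := Real.cos_pos_of_mem_Ioo ⟨by linarith, by linarith⟩
  have hcy : 0 < Real.cos y := Real.cos_pos_of_mem_Ioo ⟨by linarith, hy⟩
  have hca : 0 < Real.cos a := Real.cos_pos_of_mem_Ioo ⟨by linarith, by linarith⟩
  have hS1 : 0 < Real.sin (y - a) := Real.sin_pos_of_pos_of_lt_pi (by linarith) (by linarith)
  have hS2 : 0 < Real.sin (y - x) := Real.sin_pos_of_pos_of_lt_pi (by linarith) (by linarith)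
  have f1 : 0 < Real.sin y * Real.cos a - Real.cos y * Real.sin a := by
    have h := hS1; rw [Real.sin_sub] at h; exact h
  have f2 : 0 < Real.sin y * Real.cos x - Real.cos y * Real.sin x := by
    have h := hS2; rw [Real.sin_sub] at h; exact h
  have hC3 : Real.cos (x + y - a) < 1 := by
    have h1 : 0 < x + y - a := by linarith
    have h2 : x + y - a ≤ π := by linarith
    calc Real.cos (x + y - a) < Real.cos 0 :=
          Real.cos_lt_cos_of_nonneg_of_le_pi le_rfl h2 h1
      _ = 1 := Real.cos_zero
  have f3 : (Real.cos x * Real.cos y - Real.sin x * Real.sin y) * Real.cos a +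
      (Real.sin x * Real.cos y + Real.cos x * Real.sin y) * Real.sin a < 1 := by
    have h := hC3
    rw [Real.cos_sub, Real.cos_add, Real.sin_add] at h
    exact h
  have hzy : Real.sin y * Real.sin z = Real.sin x * Real.sin a := by
    rw [div_eq_div_iff hsa.ne' hsz.ne'] at hdef; exact hdef
  have px := Real.sin_sq_add_cos_sq x
  have py := Real.sin_sq_add_cos_sq y
  have pa := Real.sin_sq_add_cos_sq a
  have pz := Real.sin_sq_add_cos_sq z
  -- key algebraic identity
  have hQ : Real.sin y ^ 2 *
      ((Real.sin a * (Real.sin y * Real.cos a - Real.cos y * Real.sin a) +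
          Real.sin z * (Real.sin a * Real.cos x + (Real.sin y * Real.cos a - Real.cos y * Real.sin a) * Real.cos a)) ^ 2 -
        (Real.cos z * (Real.sin a * (Real.sin x + (Real.sin y * Real.cos a - Real.cos y * Real.sin a)))) ^ 2) =
      2 * Real.sin x * Real.sin a ^ 3 * (Real.sin y * Real.cos a - Real.cos y * Real.sin a) *
        (Real.sin y * Real.cos x - Real.cos y * Real.sin x) *
        (1 - ((Real.cos x * Real.cos y - Real.sin x * Real.sin y) * Real.cos a +
          (Real.sin x * Real.cos y + Real.cos x * Real.sin y) * Real.sin a)) := by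
    linear_combination (1*Real.sin y*Real.sin a^4*Real.sin z + 1*Real.sin y*Real.cos y^2*Real.sin a^2*Real.cos a^2*Real.sin z + 2*Real.sin y*Real.cos y^2*Real.sin a^3*Real.cos a + (-2)*Real.sin y^2*Real.cos y*Real.sin a*Real.cos a^3*Real.sin z + (-4)*Real.sin y^2*Real.cos y*Real.sin a^2*Real.cos a^2 + (-2)*Real.sin y^2*Real.cos y*Real.sin a^3*Real.cos a*Real.sin z + 1*Real.sin y^3*Real.cos a^4*Real.sin z + 2*Real.sin y^3*Real.sin a*Real.cos a^3 + 1*Real.sin y^3*Real.sin a^2*Real.sin z + (-2)*Real.sin y^3*Real.sin a^4*Real.sin z + (-2)*Real.cos x*Real.sin y*Real.cos y*Real.sin a^2*Real.cos a*Real.sin z + (-2)*Real.cos x*Real.sin y*Real.cos y*Real.sin a^3 + 2*Real.cos x*Real.sin y^2*Real.sin a*Real.cos a^2*Real.sin z + 2*Real.cos x*Real.sin y^2*Real.sin a^2*Real.cos a + 1*Real.cos x^2*Real.sin y*Real.sin a^2*Real.sin z + 1*Real.sin x*Real.sin a^5 + 1*Real.sin x*Real.cos y^2*Real.sin a^3*Real.cos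 a^2 + (-2)*Real.sin x*Real.sin y*Real.cos y*Real.sin a^2*Real.cos a^3 + (-2)*Real.sin x*Real.sin y*Real.cos y*Real.sin a^3*Real.sin z + (-2)*Real.sin x*Real.sin y*Real.cos y*Real.sin a^4*Real.cos a + 1*Real.sin x*Real.sin y^2*Real.sin a*Real.cos a^4 + 2*Real.sin x*Real.sin y^2*Real.sin a^2*Real.cos a*Real.sin z + 1*Real.sin x*Real.sin y^2*Real.sin a^3 + (-2)*Real.sin x*Real.sin y^2*Real.sin a^5 + (-2)*Real.sin x*Real.cos x*Real.cos y*Real.sin a^3*Real.cos a + 2*Real.sin x*Real.cos x*Real.sin y*Real.sin a^2*Real.cos a^2 + 1*Real.sin x*Real.cos x^2*Real.sin a^3 + (-2)*Real.sin x^2*Real.cos y*Real.sin a^4 + 1*Real.sin x^2*Real.sin y*Real.sin a^2*Real.sin z + 2*Real.sin x^2*Real.sin y*Real.sin a^3*Real.cos a + 1*Real.sin x^3*Real.sin a^3) * hzy +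
      ((-1)*Real.sin y^2*Real.sin a^4 + 2*Real.sin y^3*Real.cos y*Real.sin a^3*Real.cos a + (-1)*Real.sin y^4*Real.sin a^2 + 2*Real.sin y^4*Real.sin a^4 + 2*Real.sin x*Real.sin y^2*Real.cos y*Real.sin a^3 + (-2)*Real.sin x*Real.sin y^3*Real.sin a^2*Real.cos a + (-1)*Real.sin x^2*Real.sin y^2*Real.sin a^2) * pz +
      ((-2)*Real.sin x*Real.sin y*Real.cos y^2*Real.sin a^4*Real.cos a + 2*Real.sin x*Real.sin y^2*Real.cos y*Real.sin a^3*Real.cos a^2 + (-2)*Real.sin x*Real.sin y^2*Real.cos y*Real.sin a^5 + 2*Real.sin x*Real.sin y^3*Real.sin a^4*Real.cos a + 1*Real.sin x^2*Real.sin a^4) * px +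
      (1*Real.sin y^2*Real.sin a^4 + (-1)*Real.sin y^2*Real.sin a^4*Real.cos z^2 + (-2)*Real.sin x^2*Real.sin a^4 + 1*Real.sin x^2*Real.sin a^4*Real.cos a^2 + 2*Real.sin x^2*Real.cos x*Real.cos y*Real.sin a^4*Real.cos a + (-2)*Real.sin x^2*Real.cos x*Real.sin y*Real.sin a^3*Real.cos a^2 + 2*Real.sin x^3*Real.cos y*Real.sin a^5 + (-2)*Real.sin x^3*Real.sin y*Real.sin a^4*Real.cos a) * py +
      (1*Real.sin y^4*Real.sin a^2 + (-1)*Real.sin y^4*Real.sin a^2*Real.cos z^2 + (-2)*Real.sin x*Real.sin y^2*Real.cos y*Real.sin a^3 + 2*Real.sin x*Real.sin y^3*Real.sin a^2*Real.cos a + 1*Real.sin x^2*Real.sin a^4 + (-2)*Real.sin x^2*Real.sin y*Real.cos y*Real.sin a^3*Real.cos a + 1*Real.sin x^2*Real.sin y^2*Real.sin a^2 + 1*Real.sin x^2*Real.sin y^2*Real.sin a^2*Real.cos a^2 + (-2)*Real.sin x^2*Real.sin y^2*Real.sin a^4) * pa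
  have hpos : 0 < 2 * Real.sin x * Real.sin a ^ 3 * (Real.sin y * Real.cos a - Real.cos y * Real.sin a) *
      (Real.sin y * Real.cos x - Real.cos y * Real.sin x) *
      (1 - ((Real.cos x * Real.cos y - Real.sin x * Real.sin y) * Real.cos a +
        (Real.sin x * Real.cos y + Real.cos x * Real.sin y) * Real.sin a)) := by
    have h3 : 0 < 1 - ((Real.cos x * Real.cos y - Real.sin x * Real.sin y) * Real.cos a +
        (Real.sin x * Real.cos y + Real.cos x * Real.sin y) * Real.sin a) := by linarith
    have := mul_pos (mul_pos (mul_pos (mul_pos (mul_pos two_pos hsx) (pow_pos hsa 3)) f1) f2) h3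
    linarith
  have hdiff : 0 <
      (Real.sin a * (Real.sin y * Real.cos a - Real.cos y * Real.sin a) +
          Real.sin z * (Real.sin a * Real.cos x + (Real.sin y * Real.cos a - Real.cos y * Real.sin a) * Real.cos a)) ^ 2 -
        (Real.cos z * (Real.sin a * (Real.sin x + (Real.sin y * Real.cos a - Real.cos y * Real.sin a)))) ^ 2 := by
    exact aux_pos_of_sq _ _ _ hQ hpos hsy
  have hMB : 0 < Real.sin a * (Real.sin y * Real.cos a - Real.cos y * Real.sin a) +
      Real.sin z * (Real.sin a * Real.cos x + (Real.sin y * Real.cos a - Real.cos y * Real.sin a) * Real.cos a) := by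
    have hB : 0 < Real.sin a * Real.cos x + (Real.sin y * Real.cos a - Real.cos y * Real.sin a) * Real.cos a := by
      linarith [mul_pos hsa hcx, mul_pos f1 hca]
    linarith [mul_pos hsa f1, mul_pos hsz hB]
  have hczA : 0 ≤ Real.cos z * (Real.sin a * (Real.sin x + (Real.sin y * Real.cos a - Real.cos y * Real.sin a))) := by
    have : 0 < Real.sin a * (Real.sin x + (Real.sin y * Real.cos a - Real.cos y * Real.sin a)) :=
      mul_pos hsa (by linarith)
    positivity
  have hmain : Real.cos z * (Real.sin a * (Real.sin x + (Real.sin y * Real.cos a - Real.cos y * Real.sin a))) <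
      Real.sin a * (Real.sin y * Real.cos a - Real.cos y * Real.sin a) +
        Real.sin z * (Real.sin a * Real.cos x + (Real.sin y * Real.cos a - Real.cos y * Real.sin a) * Real.cos a) := by
    exact aux_lt_of_sq _ _ hczA hMB hdiff
  have hnum : Real.sin (x - z) * Real.sin a + Real.sin (a - z) * Real.sin (y - a) <
      Real.sin a * Real.sin (y - a) := by
    rw [Real.sin_sub x z, Real.sin_sub a z, Real.sin_sub y a]
    linarith [hmain]
  have hrw : (1:ℝ) - Real.sin (a - z) / Real.sin a = (Real.sin a - Real.sin (a - z)) / Real.sin a := by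
    field_simp
  rw [hrw, div_lt_div_iff₀ hS1 hsa]
  linarith [hnum]
end

section
/- Let i, r be real numbers with 0 < r < i ≤ π/2 and sin i = (3/2)·sin r. Then 4·r < 3·i; equivalently, setting d = i − r, one has i − 2d < 2d. -/
open Real

theorem deviation_second_inequality (i r : ℝ)
    (hr0 : 0 < r) (hri : r < i) (hi : i ≤ π / 2)
    (hsnell : Real.sin i = (3 / 2) * Real.sin r) :
    4 * r < 3 * i := by
  by_contra h
  push_neg at h
  have hi0 : 0 < i := hr0.trans hri
  have hiπ : i ≤ π := hi.trans (by linarith [Real.pi_pos])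
  -- strict concavity: sin(3i/4) > (3/4) sin i
  have hconc := strictConcaveOn_sin_Icc.2 (Set.mem_Icc.2 ⟨le_refl 0, Real.pi_pos.le⟩)
      (Set.mem_Icc.2 ⟨hi0.le, hiπ⟩) hi0.ne
      (by norm_num : (0:ℝ) < 1/4) (by norm_num : (0:ℝ) < 3/4) (by norm_num)
  simp only [smul_eq_mul, Real.sin_zero, mul_zero, zero_add] at hconc
  have key : (3/4) * Real.sin i < Real.sin ((3/4) * i) := by linarith
  -- monotonicity: sin(3i/4) ≤ sin r
  have hmono : Real.sin ((3/4) * i) ≤ Real.sin r :=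
    Real.strictMonoOn_sin.monotoneOn
      (Set.mem_Icc.2 ⟨by nlinarith [Real.pi_pos], by linarith⟩)
      (Set.mem_Icc.2 ⟨by linarith [Real.pi_pos], by linarith⟩)
      (by linarith)
  have hsinipos : 0 < Real.sin i := Real.sin_pos_of_pos_of_lt_pi hi0 (by linarith [Real.pi_pos])
  nlinarith
end

section
/- Let i, r be real numbers with 0 < r < i ≤ π/2 and sin i = (3/2)·sin r. Then i < 2·r if and only if cos(i/2) > 3/4; equivalently, setting d = i − r, the inequality 0 < i − 2d holds exactly when i/2 < arccos(3/4). -/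
open Real

theorem deviation_first_inequality (i r : ℝ)
    (hr0 : 0 < r) (hri : r < i) (hi : i ≤ π / 2)
    (hsnell : Real.sin i = (3 / 2) * Real.sin r) :
    i < 2 * r ↔ Real.cos (i / 2) > 3 / 4 := by
  have hi0 : 0 < i := lt_trans hr0 hri
  have hs2 : Real.sin i = 2 * Real.sin (i/2) * Real.cos (i/2) := by
    rw [← Real.sin_two_mul]; ring_nf
  have hsinr : Real.sin r = (4/3) * Real.sin (i/2) * Real.cos (i/2) := by
    have : (3/2 : ℝ) * Real.sin r = 2 * Real.sin (i/2) * Real.cos (i/2) := by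
      rw [← hsnell, hs2]
    linarith
  have hsinpos : 0 < Real.sin (i/2) := Real.sin_pos_of_pos_of_lt_pi (by linarith)
    (by nlinarith [Real.pi_pos])
  have hmono : i < 2 * r ↔ Real.sin (i/2) < Real.sin r := by
    constructor
    · intro h
      exact Real.sin_lt_sin_of_lt_of_le_pi_div_two (by nlinarith [Real.pi_pos])
        (by linarith) (by linarith)
    · intro h
      by_contra hc
      push_neg at hc
      have : Real.sin r ≤ Real.sin (i/2) :=
        Real.sin_le_sin_of_le_of_le_pi_div_two (by linarith) (by linarith) (by linarith)
      linarith
  rw [hmono, hsinr]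
  constructor
  · intro h; nlinarith
  · intro h; nlinarith
end
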